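/- Let w_1, …, w_n : ℝ → ℂ be twice-differentiable curves with Im w_k(t) > 0 and w_k(t) ≠ w_j(t) for k ≠ j at every time t, forming a solution of the curved n-body problem in the Poincaré upper half plane. If the curves t ↦ w_k(t) + t (k = 1,…,n) also form a solution of the same system, then for every k and every t one has ẇ_k(t) = −1/2; equivalently, w_k(t) = w_k(0) − t/2 for all t. -/

import Mathlib

open Complex ComplexConjugate Finset

/-- The quantity `Θ_{3,(k,j)}` appearing in the denominators of the equations of
motion of the curved `n`-body problem in the Poincaré upper half plane. -/
noncomputable def halfTheta (z w : ℂ) : ℝ :=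
  (((conj z + z) * (conj w + w)
      - 2 * ((((‖z‖) ^ 2 + (‖w‖) ^ 2 : ℝ)) : ℂ)) ^ 2
    - (conj z - z) ^ 2 * (conj w - w) ^ 2).re

/-- The curves `w k` form a solution of the curved `n`-body problem in the Poincaré
upper half plane with parameter `R` and masses `m`. -/
def IsHalfPlaneSolution (R : ℝ) {n : ℕ} (m : Fin n → ℝ) (w : Fin n → ℝ → ℂ) : Prop :=
  ∀ (k : Fin n) (t : ℝ),
    deriv (deriv (w k)) t
      = 2 * (deriv (w k) t) ^ 2 / (w k t - conj (w k t))
        - (2 * (w k t - conj (w k t)) ^ 2 / (R : ℂ)) *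
          ∑ j ∈ Finset.univ.erase k,
            (m j : ℂ) * (conj (w k t) - w k t) * (conj (w j t) - w j t) ^ 2
              * (w k t - w j t) * (conj (w j t) - w k t)
              / (((halfTheta (w k t) (w j t)) ^ ((3 : ℝ) / 2) : ℝ) : ℂ)

lemma halfTheta_shift (z w : ℂ) (t : ℝ) :
    halfTheta (z + t) (w + t) = halfTheta z w := by
  unfold halfTheta
  congr 1
  have key : ∀ u : ℂ, ((‖u‖ : ℂ)) ^ 2 = u * conj u := by
    intro u; rw [← Complex.ofReal_pow, ← Complex.normSq_eq_norm_sq, Complex.mul_conj]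
  push_cast
  rw [key, key, key, key]
  simp only [map_add, Complex.conj_ofReal]
  ring

lemma hasDerivAt_coe (t : ℝ) : HasDerivAt (fun s : ℝ => (s : ℂ)) 1 t := by
  convert (hasDerivAt_id t).ofReal_comp using 1 <;> simp

/-- If a solution of the curved `n`-body problem in the Poincaré upper half plane
remains a solution after the action `w ↦ w + t`, then every body satisfies
`ẇ_k = −1/2`, i.e. `w_k(t) = w_k(0) − t/2`. -/
theorem parabolic_action_invariance (R : ℝ) (hR : 0 < R) (n : ℕ) (hn : 2 ≤ n)
    (m : Fin n → ℝ) (hm : ∀ k, 0 < m k)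
    (w : Fin n → ℝ → ℂ)
    (hw1 : ∀ k, Differentiable ℝ (w k))
    (hw2 : ∀ k, Differentiable ℝ (deriv (w k)))
    (hup : ∀ k t, 0 < (w k t).im)
    (hsep : ∀ k j, k ≠ j → ∀ t, w k t ≠ w j t)
    (hsol : IsHalfPlaneSolution R m w)
    (hsol' : IsHalfPlaneSolution R m (fun k t => w k t + (t : ℂ))) :
    ∀ k t, deriv (w k) t = -(1 / 2) ∧ w k t = w k 0 - (t : ℂ) / 2 := by
  have hv : ∀ k t, deriv (w k) t = -(1 / 2) := by
    intro k t
    have hd : w k t - conj (w k t) ≠ 0 := by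
      intro h
      have him := congrArg Complex.im h
      simp [Complex.sub_im, Complex.conj_im] at him
      exact (hup k t).ne' him
    have h1 := hsol k t
    have h2 := hsol' k t
    have hderiv : deriv (fun s : ℝ => w k s + (s : ℂ))
        = fun s => deriv (w k) s + 1 := by
      funext s
      exact (((hw1 k s).hasDerivAt.add (hasDerivAt_coe s)).deriv)
    have hconj : ∀ z : ℂ, conj (z + (t : ℂ)) = conj z + (t : ℂ) := by
      intro z; simp [Complex.conj_ofReal]
    have hcancel : ∀ a b : ℂ, a + (t : ℂ) - (b + (t : ℂ)) = a - b := by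
      intro a b; ring
    simp only [hderiv, deriv_add_const, hconj, halfTheta_shift, hcancel] at h2
    have heq := h1.symm.trans h2
    have h3 := sub_left_inj.mp heq
    rw [div_eq_div_iff hd hd] at h3
    have h4 := mul_right_cancel₀ hd h3
    linear_combination (-1 / 4 : ℂ) * h4
  intro k t
  refine ⟨hv k t, ?_⟩
  have hfd : ∀ s : ℝ, HasDerivAt (fun s : ℝ => w k s + (s : ℂ) / 2) 0 s := by
    intro s
    have h := (hw1 k s).hasDerivAt.add ((hasDerivAt_coe s).div_const 2)
    rw [hv k s] at h
    convert h using 1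
    · rfl
    · rfl
    · norm_num
  have hc : (fun s : ℝ => w k s + (s : ℂ) / 2) t
      = (fun s : ℝ => w k s + (s : ℂ) / 2) 0 :=
    is_const_of_deriv_eq_zero (fun s => (hfd s).differentiableAt) (fun s => (hfd s).deriv) t 0
  simp only at hc
  push_cast at hc
  linear_combination hc
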